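/- arXiv:math-ph/0206046 — 3 statements merged into one kernel-verified Lean document; each statement's English description precedes it below -/
import Mathlib

section
/- Let H = (p₁² + p₂²)/2 + a·x (a : ℝ) on phase space ℝ⁴. Then X = p₂ and Y = p₁² /2 + a x (equivalently H - p₂²/2) and Z = p₁ p₂ + a y all Poisson-commute with H, and H, X, Z are functionally independent (their gradients are linearly independent at a generic point). -/
/-- Canonical Poisson bracket on phase space ℝ⁴ with coordinates (x, y, p₁, p₂). -/
noncomputable def poissonBracket (F G : ℝ → ℝ → ℝ → ℝ → ℝ) (x y p q : ℝ) : ℝ :=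
    deriv (fun t => F t y p q) x * deriv (fun t => G x y t q) p
  + deriv (fun t => F x t p q) y * deriv (fun t => G x y p t) q
  - deriv (fun t => F x y t q) p * deriv (fun t => G t y p q) x
  - deriv (fun t => F x y p t) q * deriv (fun t => G x t p q) y

/-- Gradient of a phase-space function as a vector in ℝ⁴. -/
noncomputable def phaseGrad (F : ℝ → ℝ → ℝ → ℝ → ℝ) (x y p q : ℝ) : Fin 4 → ℝ :=
  ![deriv (fun t => F t y p q) x, deriv (fun t => F x t p q) y,
    deriv (fun t => F x y t q) p, deriv (fun t => F x y p t) q]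


lemma deriv_amul (a x : ℝ) : deriv (fun t => a * t) x = a := by
  simpa using ((hasDerivAt_id x).const_mul a).deriv

theorem linear_potential_superintegrable (a : ℝ) :
    (∀ x y p q : ℝ,
      poissonBracket (fun x _ p q => (p ^ 2 + q ^ 2) / 2 + a * x)
        (fun _ _ _ q => q) x y p q = 0) ∧
    (∀ x y p q : ℝ,
      poissonBracket (fun x _ p q => (p ^ 2 + q ^ 2) / 2 + a * x)
        (fun x _ p _ => p ^ 2 / 2 + a * x) x y p q = 0) ∧
    (∀ x y p q : ℝ,
      poissonBracket (fun x _ p q => (p ^ 2 + q ^ 2) / 2 + a * x)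
        (fun _ y p q => p * q + a * y) x y p q = 0) ∧
    (a ≠ 0 → ∃ x y p q : ℝ, LinearIndependent ℝ
      ![phaseGrad (fun x _ p q => (p ^ 2 + q ^ 2) / 2 + a * x) x y p q,
        phaseGrad (fun _ _ _ q => q) x y p q,
        phaseGrad (fun _ y p q => p * q + a * y) x y p q]) := by
  refine ⟨?_, ?_, ?_, ?_⟩
  · intro x y p q
    simp [poissonBracket, deriv_const_mul, deriv_add, deriv_amul]
  · intro x y p q
    simp [poissonBracket, deriv_const_mul, deriv_add, deriv_amul]
    ring
  · intro x y p q
    simp [poissonBracket, deriv_const_mul, deriv_add, deriv_amul]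
    ring
  · intro ha
    refine ⟨0, 0, 1, 0, ?_⟩
    have h1 : phaseGrad (fun x _ p q => (p ^ 2 + q ^ 2) / 2 + a * x) 0 0 1 0
        = ![a, 0, 1, 0] := by
      funext i
      simp [phaseGrad, deriv_const_mul, deriv_add, deriv_amul]
    have h2 : phaseGrad (fun _ _ _ q => (q : ℝ)) 0 0 1 0 = ![0, 0, 0, 1] := by
      funext i
      simp [phaseGrad]
    have h3 : phaseGrad (fun _ y p q => p * q + a * y) 0 0 1 0 = ![0, a, 0, 1] := by
      funext i
      simp [phaseGrad, deriv_const_mul, deriv_add, deriv_amul]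
    rw [h1, h2, h3]
    rw [Fintype.linearIndependent_iff]
    intro g hg i
    have h0 := congrFun hg 0
    have h1' := congrFun hg 1
    have h2' := congrFun hg 2
    have h3' := congrFun hg 3
    simp [Fin.sum_univ_succ] at h0 h1' h2' h3'
    have hg0 : g 0 = 0 := by
      rcases h0 with h | h
      · exact h
      · exact absurd h ha
    have hg2 : g 2 = 0 := by
      rcases h1' with h | h
      · exact h
      · exact absurd h ha
    have hg1 : g 1 = 0 := by
      have := h3'
      rw [hg2] at this
      linarith
    fin_cases i <;> simp [hg0, hg1, hg2]
end

section
/- Suppose V : ℝ² → ℝ is C¹ and g₁, g₂ : ℝ² → ℝ are C¹ and satisfy g₁ V_x + g₂ V_y = 0, (g₁)_x = 3f₁ V_x + f₂ V_y, (g₂)_y = f₃ V_x + 3f₄ V_y, and (g₁)_y + (g₂)_x = 2(f₂ V_x + f₃ V_y), where f₁,...,f₄ are the cubic polynomial coefficient functions determined by constants A_{ijk}. Then the phase-space function X = Σ_{i+j+k=3} A_{ijk} p₁^i p₂^j L^k + g₁ p₁ + g₂ p₂ (with L = xp₂ - yp₁) Poisson-commutes with H = (p₁² + p₂²)/2 +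 V(x,y). -/
private lemma pdiff1 (F : ℝ → ℝ → ℝ) (h : ContDiff ℝ 1 (fun z : ℝ × ℝ => F z.1 z.2)) (x y : ℝ) :
    DifferentiableAt ℝ (fun t => F t y) x := by
  have h2 : DifferentiableAt ℝ ((fun z : ℝ × ℝ => F z.1 z.2) ∘ (fun t : ℝ => (t, y))) x :=
    DifferentiableAt.comp x (h.differentiable one_ne_zero (x, y))
      (differentiableAt_id.prodMk (differentiableAt_const y))
  exact h2

private lemma pdiff2 (F : ℝ → ℝ → ℝ) (h : ContDiff ℝ 1 (fun z : ℝ × ℝ => F z.1 z.2)) (x y : ℝ) :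
    DifferentiableAt ℝ (fun t => F x t) y := by
  have h2 : DifferentiableAt ℝ ((fun z : ℝ × ℝ => F z.1 z.2) ∘ (fun t : ℝ => (x, t))) y :=
    DifferentiableAt.comp y (h.differentiable one_ne_zero (x, y))
      ((differentiableAt_const x).prodMk differentiableAt_id)
  exact h2

theorem third_order_integral_sufficiency
    (A₃₀₀ A₂₁₀ A₂₀₁ A₁₂₀ A₁₁₁ A₁₀₂ A₀₃₀ A₀₂₁ A₀₁₂ A₀₀₃ : ℝ)
    (f₁ : ℝ → ℝ) (f₂ f₃ : ℝ → ℝ → ℝ) (f₄ : ℝ → ℝ)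
    (hf₁ : ∀ y, f₁ y = -A₃₀₀ * y ^ 3 + A₂₁₀ * y ^ 2 - A₁₂₀ * y + A₀₃₀)
    (hf₂ : ∀ x y, f₂ x y = 3 * A₃₀₀ * x * y ^ 2 - 2 * A₂₁₀ * x * y + A₂₀₁ * y ^ 2
        + A₁₂₀ * x - A₁₁₁ * y + A₀₂₁)
    (hf₃ : ∀ x y, f₃ x y = -3 * A₃₀₀ * x ^ 2 * y + A₂₁₀ * x ^ 2 - 2 * A₂₀₁ * x * y
        + A₁₁₁ * x - A₁₀₂ * y + A₀₁₂)
    (hf₄ : ∀ x, f₄ x = A₃₀₀ * x ^ 3 + A₂₀₁ * x ^ 2 + A₁₀₂ * x + A₀₀₃)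
    (V g₁ g₂ : ℝ → ℝ → ℝ)
    (hV : ContDiff ℝ 1 (fun z : ℝ × ℝ => V z.1 z.2))
    (hg₁ : ContDiff ℝ 1 (fun z : ℝ × ℝ => g₁ z.1 z.2))
    (hg₂ : ContDiff ℝ 1 (fun z : ℝ × ℝ => g₂ z.1 z.2))
    (heq1 : ∀ x y : ℝ,
      g₁ x y * deriv (fun t => V t y) x + g₂ x y * deriv (fun t => V x t) y = 0)
    (heq2 : ∀ x y : ℝ, deriv (fun t => g₁ t y) x
      = 3 * f₁ y * deriv (fun t => V t y) x + f₂ x y * deriv (fun t => V x t) y)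
    (heq3 : ∀ x y : ℝ, deriv (fun t => g₂ x t) y
      = f₃ x y * deriv (fun t => V t y) x + 3 * f₄ x * deriv (fun t => V x t) y)
    (heq4 : ∀ x y : ℝ, deriv (fun t => g₁ x t) y + deriv (fun t => g₂ t y) x
      = 2 * (f₂ x y * deriv (fun t => V t y) x + f₃ x y * deriv (fun t => V x t) y)) :
    ∀ x y p q : ℝ,
      poissonBracket (fun x y p q => (p ^ 2 + q ^ 2) / 2 + V x y)
        (fun x y p q =>
          A₃₀₀ * (x * q - y * p) ^ 3
          + A₂₁₀ * (x * q - y * p) ^ 2 * p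
          + A₂₀₁ * (x * q - y * p) ^ 2 * q
          + A₁₂₀ * (x * q - y * p) * p ^ 2
          + A₁₁₁ * (x * q - y * p) * p * q
          + A₁₀₂ * (x * q - y * p) * q ^ 2
          + A₀₃₀ * p ^ 3 + A₀₂₁ * p ^ 2 * q + A₀₁₂ * p * q ^ 2 + A₀₀₃ * q ^ 3
          + g₁ x y * p + g₂ x y * q) x y p q = 0 := by
  intro x y p q
  -- partial derivatives of V, g₁, g₂ as HasDerivAt
  have hVx : HasDerivAt (fun t => V t y) (deriv (fun t => V t y) x) x :=
    (pdiff1 V hV x y).hasDerivAt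
  have hVy : HasDerivAt (fun t => V x t) (deriv (fun t => V x t) y) y :=
    (pdiff2 V hV x y).hasDerivAt
  have hg1x : HasDerivAt (fun t => g₁ t y) (deriv (fun t => g₁ t y) x) x :=
    (pdiff1 g₁ hg₁ x y).hasDerivAt
  have hg1y : HasDerivAt (fun t => g₁ x t) (deriv (fun t => g₁ x t) y) y :=
    (pdiff2 g₁ hg₁ x y).hasDerivAt
  have hg2x : HasDerivAt (fun t => g₂ t y) (deriv (fun t => g₂ t y) x) x :=
    (pdiff1 g₂ hg₂ x y).hasDerivAt
  have hg2y : HasDerivAt (fun t => g₂ x t) (deriv (fun t => g₂ x t) y) y :=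
    (pdiff2 g₂ hg₂ x y).hasDerivAt
  -- H derivatives
  have hHx : HasDerivAt (fun t : ℝ => (p ^ 2 + q ^ 2) / 2 + V t y)
      (deriv (fun t => V t y) x) x := hVx.const_add _
  have hHy : HasDerivAt (fun t : ℝ => (p ^ 2 + q ^ 2) / 2 + V x t)
      (deriv (fun t => V x t) y) y := hVy.const_add _
  have hHp : HasDerivAt (fun t : ℝ => (t ^ 2 + q ^ 2) / 2 + V x y) p p := by
    have h := (((hasDerivAt_pow 2 p).add_const (q ^ 2)).div_const 2).add_const (V x y)
    simpa using h
  have hHq : HasDerivAt (fun t : ℝ => (p ^ 2 + t ^ 2) / 2 + V x y) q q := by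
    have h := ((((hasDerivAt_pow 2 q).const_add (p ^ 2)).div_const 2)).add_const (V x y)
    simpa using h
  -- X derivative in p
  have hLp : HasDerivAt (fun t : ℝ => x * q - y * t) (-(y * 1)) p :=
    ((hasDerivAt_id p).const_mul y).const_sub (x * q)
  have hXp := ((((((((((((hLp.pow 3).const_mul A₃₀₀).add
      (((hLp.pow 2).const_mul A₂₁₀).mul (hasDerivAt_id p))).add
      (((hLp.pow 2).const_mul A₂₀₁).mul_const q)).add
      ((hLp.const_mul A₁₂₀).mul (hasDerivAt_pow 2 p))).add
      (((hLp.const_mul A₁₁₁).mul (hasDerivAt_id p)).mul_const q)).add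
      ((hLp.const_mul A₁₀₂).mul_const (q ^ 2))).add
      ((hasDerivAt_pow 3 p).const_mul A₀₃₀)).add
      (((hasDerivAt_pow 2 p).const_mul A₀₂₁).mul_const q)).add
      (((hasDerivAt_id p).const_mul A₀₁₂).mul_const (q ^ 2))).add_const
      (A₀₀₃ * q ^ 3)).add
      ((hasDerivAt_id p).const_mul (g₁ x y))).add_const (g₂ x y * q)
  -- X derivative in q
  have hLq : HasDerivAt (fun t : ℝ => x * t - y * p) (x * 1) q :=
    ((hasDerivAt_id q).const_mul x).sub_const (y * p)
  have hXq := ((((((((((((hLq.pow 3).const_mul A₃₀₀).add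
      (((hLq.pow 2).const_mul A₂₁₀).mul_const p)).add
      (((hLq.pow 2).const_mul A₂₀₁).mul (hasDerivAt_id q))).add
      ((hLq.const_mul A₁₂₀).mul_const (p ^ 2))).add
      (((hLq.const_mul A₁₁₁).mul_const p).mul (hasDerivAt_id q))).add
      ((hLq.const_mul A₁₀₂).mul (hasDerivAt_pow 2 q))).add_const
      (A₀₃₀ * p ^ 3)).add
      ((hasDerivAt_id q).const_mul (A₀₂₁ * p ^ 2))).add
      (((hasDerivAt_pow 2 q)).const_mul (A₀₁₂ * p))).add
      ((hasDerivAt_pow 3 q).const_mul A₀₀₃)).add_const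
      (g₁ x y * p)).add ((hasDerivAt_id q).const_mul (g₂ x y))
  -- X derivative in x
  have hLx : HasDerivAt (fun t : ℝ => t * q - y * p) (1 * q) x :=
    ((hasDerivAt_id x).mul_const q).sub_const (y * p)
  have hXx := ((((((((((((hLx.pow 3).const_mul A₃₀₀).add
      (((hLx.pow 2).const_mul A₂₁₀).mul_const p)).add
      (((hLx.pow 2).const_mul A₂₀₁).mul_const q)).add
      ((hLx.const_mul A₁₂₀).mul_const (p ^ 2))).add
      (((hLx.const_mul A₁₁₁).mul_const p).mul_const q)).add
      ((hLx.const_mul A₁₀₂).mul_const (q ^ 2))).add_const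
      (A₀₃₀ * p ^ 3)).add_const (A₀₂₁ * p ^ 2 * q)).add_const
      (A₀₁₂ * p * q ^ 2)).add_const (A₀₀₃ * q ^ 3)).add
      (hg1x.mul_const p)).add (hg2x.mul_const q)
  -- X derivative in y
  have hLy : HasDerivAt (fun t : ℝ => x * q - t * p) (-(1 * p)) y :=
    ((hasDerivAt_id y).mul_const p).const_sub (x * q)
  have hXy := ((((((((((((hLy.pow 3).const_mul A₃₀₀).add
      (((hLy.pow 2).const_mul A₂₁₀).mul_const p)).add
      (((hLy.pow 2).const_mul A₂₀₁).mul_const q)).add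
      ((hLy.const_mul A₁₂₀).mul_const (p ^ 2))).add
      (((hLy.const_mul A₁₁₁).mul_const p).mul_const q)).add
      ((hLy.const_mul A₁₀₂).mul_const (q ^ 2))).add_const
      (A₀₃₀ * p ^ 3)).add_const (A₀₂₁ * p ^ 2 * q)).add_const
      (A₀₁₂ * p * q ^ 2)).add_const (A₀₀₃ * q ^ 3)).add
      (hg1y.mul_const p)).add (hg2y.mul_const q)
  simp only [id_eq, Pi.pow_apply] at hXp hXq
  simp only [poissonBracket]
  erw [hHx.deriv, hHy.deriv, hHp.deriv, hHq.deriv, hXp.deriv, hXq.deriv, hXx.deriv, hXy.deriv]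
  simp only [hf₁, hf₂, hf₃, hf₄] at heq2 heq3 heq4
  linear_combination heq1 x y - p ^ 2 * heq2 x y - q ^ 2 * heq3 x y - p * q * heq4 x y
end

section
/- Suppose V : ℝ² → ℝ is C³ and g₁, g₂ : ℝ² → ℝ are C² functions satisfying (g₁)_x = 3f₁V_x + f₂V_y, (g₂)_y = f₃V_x + 3f₄V_y, (g₁)_y + (g₂)_x = 2(f₂V_x + f₃V_y) on ℝ², with f₁,…,f₄ as determined by constants A_{ijk}. Then V satisfies the linear third-order compatibility condition: 0 = -f₃V_{xxx} + (2f₂ - 3f₄)V_{xxy} + (-3f₁ + 2f₃)V_{xyy} - f₂V_{yyy} + 2(f_{2y} - f_{3x})V_{xx} + 2(-3f_{1y} + f_{2x} + f_{3y} - 3f_{4x})V_{xy} + 2(-f_{2y} + f_{3x})V_{yy} + (-3f_{1yy} + 2f_{2xy} - f_{3xx})V_x + (-f_{2yy} + 2f_{3xy} - 3f_{4xx})V_y. -/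
noncomputable section
open scoped Topology

def pd1 (F : ℝ × ℝ → ℝ) (z : ℝ × ℝ) : ℝ := fderiv ℝ F z (1, 0)
def pd2 (F : ℝ × ℝ → ℝ) (z : ℝ × ℝ) : ℝ := fderiv ℝ F z (0, 1)

lemma hasDerivAt_slice1 {F : ℝ × ℝ → ℝ} {x y : ℝ} (hF : DifferentiableAt ℝ F (x, y)) :
    HasDerivAt (fun t => F (t, y)) (pd1 F (x, y)) x := by
  have h : HasDerivAt (fun t : ℝ => (t, y)) ((1 : ℝ), (0 : ℝ)) x := by
    simpa using (hasDerivAt_id x).prodMk (hasDerivAt_const x y)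
  exact hF.hasFDerivAt.comp_hasDerivAt x h

lemma hasDerivAt_slice2 {F : ℝ × ℝ → ℝ} {x y : ℝ} (hF : DifferentiableAt ℝ F (x, y)) :
    HasDerivAt (fun t => F (x, t)) (pd2 F (x, y)) y := by
  have h : HasDerivAt (fun t : ℝ => (x, t)) ((0 : ℝ), (1 : ℝ)) y := by
    simpa using (hasDerivAt_const y x).prodMk (hasDerivAt_id y)
  exact hF.hasFDerivAt.comp_hasDerivAt y h

lemma deriv_slice1 {F : ℝ × ℝ → ℝ} {x y : ℝ} (hF : DifferentiableAt ℝ F (x, y)) :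
    deriv (fun t => F (t, y)) x = pd1 F (x, y) := (hasDerivAt_slice1 hF).deriv

lemma deriv_slice2 {F : ℝ × ℝ → ℝ} {x y : ℝ} (hF : DifferentiableAt ℝ F (x, y)) :
    deriv (fun t => F (x, t)) y = pd2 F (x, y) := (hasDerivAt_slice2 hF).deriv

lemma pd1_eq_of_hasDerivAt {F : ℝ × ℝ → ℝ} {x y d : ℝ} (hF : DifferentiableAt ℝ F (x, y))
    (h : HasDerivAt (fun t => F (t, y)) d x) : pd1 F (x, y) = d :=
  (hasDerivAt_slice1 hF).unique h

lemma pd2_eq_of_hasDerivAt {F : ℝ × ℝ → ℝ} {x y d : ℝ} (hF : DifferentiableAt ℝ F (x, y))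
    (h : HasDerivAt (fun t => F (x, t)) d y) : pd2 F (x, y) = d :=
  (hasDerivAt_slice2 hF).unique h

lemma contDiff_pd1 {n m : WithTop ℕ∞} {F : ℝ × ℝ → ℝ} (hF : ContDiff ℝ n F)
    (hmn : m + 1 ≤ n) : ContDiff ℝ m (pd1 F) :=
  (hF.fderiv_right hmn).clm_apply contDiff_const

lemma contDiff_pd2 {n m : WithTop ℕ∞} {F : ℝ × ℝ → ℝ} (hF : ContDiff ℝ n F)
    (hmn : m + 1 ≤ n) : ContDiff ℝ m (pd2 F) :=
  (hF.fderiv_right hmn).clm_apply contDiff_const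

lemma pd1_sub {F G : ℝ × ℝ → ℝ} {z : ℝ × ℝ} (hF : DifferentiableAt ℝ F z)
    (hG : DifferentiableAt ℝ G z) :
    pd1 (fun w => F w - G w) z = pd1 F z - pd1 G z := by
  simp [pd1, fderiv_fun_sub hF hG]

lemma pd2_sub {F G : ℝ × ℝ → ℝ} {z : ℝ × ℝ} (hF : DifferentiableAt ℝ F z)
    (hG : DifferentiableAt ℝ G z) :
    pd2 (fun w => F w - G w) z = pd2 F z - pd2 G z := by
  simp [pd2, fderiv_fun_sub hF hG]

lemma schwarz_master {F φ1 φ2 : ℝ × ℝ → ℝ} {z : ℝ × ℝ}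
    (hF : Differentiable ℝ F)
    (h1 : ∀ w, pd1 F w = φ1 w) (h2 : ∀ w, pd2 F w = φ2 w)
    (d1 : DifferentiableAt ℝ φ1 z) (d2 : DifferentiableAt ℝ φ2 z) :
    pd2 φ1 z = pd1 φ2 z := by
  set L1 : ℝ × ℝ →L[ℝ] ℝ := ContinuousLinearMap.fst ℝ ℝ ℝ
  set L2 : ℝ × ℝ →L[ℝ] ℝ := ContinuousLinearMap.snd ℝ ℝ ℝ
  set f' : ℝ × ℝ → (ℝ × ℝ →L[ℝ] ℝ) := fun w => φ1 w • L1 + φ2 w • L2 with hf'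
  have key : ∀ w, fderiv ℝ F w = f' w := by
    intro w
    refine ContinuousLinearMap.ext fun v => ?_
    have hv : v = v.1 • ((1 : ℝ), (0 : ℝ)) + v.2 • ((0 : ℝ), (1 : ℝ)) := by
      ext <;> simp
    rw [hv]
    simp only [map_add, map_smul, hf', ContinuousLinearMap.add_apply,
      ContinuousLinearMap.smul_apply, ContinuousLinearMap.coe_fst', L1,
      ContinuousLinearMap.coe_snd', L2]
    have e1 := h1 w
    have e2 := h2 w
    simp only [pd1, pd2] at e1 e2
    rw [e1, e2]
    simp
  have hFd : ∀ w, HasFDerivAt F (f' w) w := fun w => key w ▸ (hF w).hasFDerivAt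
  have hf'd : DifferentiableAt ℝ f' z :=
    (d1.smul_const L1).add (d2.smul_const L2)
  have hsym := second_derivative_symmetric (𝕜 := ℝ) hFd hf'd.hasFDerivAt
      ((0 : ℝ), (1 : ℝ)) ((1 : ℝ), (0 : ℝ))
  have hφ1 : φ1 = fun w => (ContinuousLinearMap.apply ℝ ℝ ((1 : ℝ), (0 : ℝ))) (f' w) := by
    funext w
    simp [hf', L1, L2]
  have hφ2 : φ2 = fun w => (ContinuousLinearMap.apply ℝ ℝ ((0 : ℝ), (1 : ℝ))) (f' w) := by
    funext w
    simp [hf', L1, L2]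
  have D1 : HasFDerivAt φ1
      ((ContinuousLinearMap.apply ℝ ℝ ((1 : ℝ), (0 : ℝ))).comp (fderiv ℝ f' z)) z := by
    rw [hφ1]
    exact (ContinuousLinearMap.apply ℝ ℝ ((1 : ℝ), (0 : ℝ))).hasFDerivAt.comp z
      hf'd.hasFDerivAt
  have D2 : HasFDerivAt φ2
      ((ContinuousLinearMap.apply ℝ ℝ ((0 : ℝ), (1 : ℝ))).comp (fderiv ℝ f' z)) z := by
    rw [hφ2]
    exact (ContinuousLinearMap.apply ℝ ℝ ((0 : ℝ), (1 : ℝ))).hasFDerivAt.comp z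
      hf'd.hasFDerivAt
  have e1 : pd2 φ1 z = fderiv ℝ f' z ((0 : ℝ), (1 : ℝ)) ((1 : ℝ), (0 : ℝ)) := by
    rw [pd2, D1.fderiv]; rfl
  have e2 : pd1 φ2 z = fderiv ℝ f' z ((1 : ℝ), (0 : ℝ)) ((0 : ℝ), (1 : ℝ)) := by
    rw [pd1, D2.fderiv]; rfl
  rw [e1, e2, hsym]

/-- the abstract compatibility relation coming from cross differentiation -/
lemma compat {G1 G2 P Q R : ℝ × ℝ → ℝ}
    (hG1 : ContDiff ℝ 2 G1) (hG2 : ContDiff ℝ 2 G2)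
    (hP : ContDiff ℝ 2 P) (hQ : ContDiff ℝ 2 Q) (hR : ContDiff ℝ 2 R)
    (e1 : ∀ w, pd1 G1 w = P w) (e2 : ∀ w, pd2 G2 w = Q w)
    (e3 : ∀ w, pd2 G1 w + pd1 G2 w = R w) (z : ℝ × ℝ) :
    pd2 (pd2 P) z + pd1 (pd1 Q) z = pd1 (pd2 R) z := by
  have two : ((1 : ℕ) : WithTop ℕ∞) + 1 ≤ 2 := by norm_num
  have dG1 : Differentiable ℝ G1 := hG1.differentiable (by norm_num)
  have dG2 : Differentiable ℝ G2 := hG2.differentiable (by norm_num)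
  have cG1x : ContDiff ℝ 1 (pd1 G1) := contDiff_pd1 hG1 two
  have cG1y : ContDiff ℝ 1 (pd2 G1) := contDiff_pd2 hG1 two
  have cG2x : ContDiff ℝ 1 (pd1 G2) := contDiff_pd1 hG2 two
  have cG2y : ContDiff ℝ 1 (pd2 G2) := contDiff_pd2 hG2 two
  have cP2 : ContDiff ℝ 1 (pd2 P) := contDiff_pd2 hP two
  have cQ1 : ContDiff ℝ 1 (pd1 Q) := contDiff_pd1 hQ two
  have cR2 : ContDiff ℝ 1 (pd2 R) := contDiff_pd2 hR two
  have dR : Differentiable ℝ R := hR.differentiable (by norm_num)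
  have dP : Differentiable ℝ P := hP.differentiable (by norm_num)
  have dQ : Differentiable ℝ Q := hQ.differentiable (by norm_num)
  -- mixed partials of G1 : pd1 (pd2 G1) = pd2 (pd1 G1) = pd2 P
  have hA : ∀ w, pd1 (pd2 G1) w = pd2 P w := by
    intro w
    have hs := schwarz_master (φ1 := pd1 G1) (φ2 := pd2 G1) (z := w) dG1 (fun _ => rfl) (fun _ => rfl)
      (cG1x.differentiable one_ne_zero).differentiableAt (cG1y.differentiable one_ne_zero).differentiableAt
    rw [← hs, show pd1 G1 = P from funext e1]
  have hB : ∀ w, pd2 (pd2 G1) w = pd2 R w - pd1 Q w := by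
    intro w
    have hs := schwarz_master (φ1 := pd1 G2) (φ2 := pd2 G2) (z := w) dG2 (fun _ => rfl) (fun _ => rfl)
      (cG2x.differentiable one_ne_zero).differentiableAt (cG2y.differentiable one_ne_zero).differentiableAt
    have hG1G2 : pd2 G1 = fun u => R u - pd1 G2 u := by
      funext u
      rw [← e3 u]; ring
    rw [hG1G2, pd2_sub (dR w)
      ((cG2x.differentiable one_ne_zero).differentiableAt)]
    have : pd2 (pd1 G2) w = pd1 Q w := by
      rw [hs, show pd2 G2 = Q from funext e2]
    rw [this]
  have main := schwarz_master (φ1 := pd2 P) (φ2 := fun u => pd2 R u - pd1 Q u)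
      (cG1y.differentiable one_ne_zero) hA hB
      (cP2.differentiable one_ne_zero).differentiableAt
      (((cR2.differentiable one_ne_zero).differentiableAt (x := z)).sub
        ((cQ1.differentiable one_ne_zero).differentiableAt))
  rw [main, pd1_sub ((cR2.differentiable one_ne_zero).differentiableAt)
    ((cQ1.differentiable one_ne_zero).differentiableAt)]
  ring

end


theorem linear_compatibility_condition
    (A₃₀₀ A₂₁₀ A₂₀₁ A₁₂₀ A₁₁₁ A₁₀₂ A₀₃₀ A₀₂₁ A₀₁₂ A₀₀₃ : ℝ)
    (f₁ : ℝ → ℝ) (f₂ f₃ : ℝ → ℝ → ℝ) (f₄ : ℝ → ℝ)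
    (hf₁ : ∀ y, f₁ y = -A₃₀₀ * y ^ 3 + A₂₁₀ * y ^ 2 - A₁₂₀ * y + A₀₃₀)
    (hf₂ : ∀ x y, f₂ x y = 3 * A₃₀₀ * x * y ^ 2 - 2 * A₂₁₀ * x * y + A₂₀₁ * y ^ 2
        + A₁₂₀ * x - A₁₁₁ * y + A₀₂₁)
    (hf₃ : ∀ x y, f₃ x y = -3 * A₃₀₀ * x ^ 2 * y + A₂₁₀ * x ^ 2 - 2 * A₂₀₁ * x * y
        + A₁₁₁ * x - A₁₀₂ * y + A₀₁₂)
    (hf₄ : ∀ x, f₄ x = A₃₀₀ * x ^ 3 + A₂₀₁ * x ^ 2 + A₁₀₂ * x + A₀₀₃)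
    (V g₁ g₂ : ℝ → ℝ → ℝ)
    (hV : ContDiff ℝ 3 (fun z : ℝ × ℝ => V z.1 z.2))
    (hg₁ : ContDiff ℝ 2 (fun z : ℝ × ℝ => g₁ z.1 z.2))
    (hg₂ : ContDiff ℝ 2 (fun z : ℝ × ℝ => g₂ z.1 z.2))
    (heq2 : ∀ x y : ℝ, deriv (fun t => g₁ t y) x
      = 3 * f₁ y * deriv (fun t => V t y) x + f₂ x y * deriv (fun t => V x t) y)
    (heq3 : ∀ x y : ℝ, deriv (fun t => g₂ x t) y
      = f₃ x y * deriv (fun t => V t y) x + 3 * f₄ x * deriv (fun t => V x t) y)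
    (heq4 : ∀ x y : ℝ, deriv (fun t => g₁ x t) y + deriv (fun t => g₂ t y) x
      = 2 * (f₂ x y * deriv (fun t => V t y) x + f₃ x y * deriv (fun t => V x t) y)) :
    ∀ x y : ℝ,
      0 = -f₃ x y * deriv (fun a => deriv (fun b => deriv (fun c => V c y) b) a) x
        + (2 * f₂ x y - 3 * f₄ x)
          * deriv (fun a => deriv (fun b => deriv (fun c => V c a) b) x) y
        + (-3 * f₁ y + 2 * f₃ x y)
          * deriv (fun a => deriv (fun b => deriv (fun c => V c b) x) a) y
        - f₂ x y * deriv (fun a => deriv (fun b => deriv (fun c => V x c) b) a) y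
        + 2 * (deriv (fun t => f₂ x t) y - deriv (fun t => f₃ t y) x)
          * deriv (fun t => deriv (fun u => V u y) t) x
        + 2 * (-3 * deriv f₁ y + deriv (fun t => f₂ t y) x
            + deriv (fun t => f₃ x t) y - 3 * deriv f₄ x)
          * deriv (fun t => deriv (fun u => V u t) x) y
        + 2 * (-(deriv (fun t => f₂ x t) y) + deriv (fun t => f₃ t y) x)
          * deriv (fun t => deriv (fun u => V x u) t) y
        + (-3 * deriv (deriv f₁) y + 2 * deriv (fun s => deriv (fun t => f₂ t s) x) y
            - deriv (fun t => deriv (fun u => f₃ u y) t) x)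
          * deriv (fun t => V t y) x
        + (-(deriv (fun t => deriv (fun u => f₂ x u) t) y)
            + 2 * deriv (fun s => deriv (fun t => f₃ t s) x) y - 3 * deriv (deriv f₄) x)
          * deriv (fun t => V x t) y := by

  -- replace f's by their polynomial formulas
  have hf₁' : f₁ = fun y => -A₃₀₀ * y ^ 3 + A₂₁₀ * y ^ 2 - A₁₂₀ * y + A₀₃₀ := funext hf₁
  have hf₂' : f₂ = fun x y => 3 * A₃₀₀ * x * y ^ 2 - 2 * A₂₁₀ * x * y + A₂₀₁ * y ^ 2
      + A₁₂₀ * x - A₁₁₁ * y + A₀₂₁ := funext fun x => funext fun y => hf₂ x y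
  have hf₃' : f₃ = fun x y => -3 * A₃₀₀ * x ^ 2 * y + A₂₁₀ * x ^ 2 - 2 * A₂₀₁ * x * y
      + A₁₁₁ * x - A₁₀₂ * y + A₀₁₂ := funext fun x => funext fun y => hf₃ x y
  have hf₄' : f₄ = fun x => A₃₀₀ * x ^ 3 + A₂₀₁ * x ^ 2 + A₁₀₂ * x + A₀₀₃ := funext hf₄
  subst hf₁' hf₂' hf₃' hf₄'
  intro x y
  -- differentiability bookkeeping
  have cWx : ContDiff ℝ 2 (pd1 (fun z : ℝ × ℝ => V z.1 z.2)) := contDiff_pd1 hV (by norm_num)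
  have cWy : ContDiff ℝ 2 (pd2 (fun z : ℝ × ℝ => V z.1 z.2)) := contDiff_pd2 hV (by norm_num)
  have cWxx : ContDiff ℝ 1 (pd1 (pd1 (fun z : ℝ × ℝ => V z.1 z.2))) := contDiff_pd1 cWx (by norm_num)
  have cWxy : ContDiff ℝ 1 (pd2 (pd1 (fun z : ℝ × ℝ => V z.1 z.2))) := contDiff_pd2 cWx (by norm_num)
  have cWyy : ContDiff ℝ 1 (pd2 (pd2 (fun z : ℝ × ℝ => V z.1 z.2))) := contDiff_pd2 cWy (by norm_num)
  have cWyx : ContDiff ℝ 1 (pd1 (pd2 (fun z : ℝ × ℝ => V z.1 z.2))) := contDiff_pd1 cWy (by norm_num)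
  have dW : Differentiable ℝ (fun z : ℝ × ℝ => V z.1 z.2) := hV.differentiable (by norm_num)
  have dWx : Differentiable ℝ (pd1 (fun z : ℝ × ℝ => V z.1 z.2)) := cWx.differentiable (by norm_num)
  have dWy : Differentiable ℝ (pd2 (fun z : ℝ × ℝ => V z.1 z.2)) := cWy.differentiable (by norm_num)
  have dWxx : Differentiable ℝ (pd1 (pd1 (fun z : ℝ × ℝ => V z.1 z.2))) := cWxx.differentiable one_ne_zero
  have dWxy : Differentiable ℝ (pd2 (pd1 (fun z : ℝ × ℝ => V z.1 z.2))) := cWxy.differentiable one_ne_zero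
  have dWyy : Differentiable ℝ (pd2 (pd2 (fun z : ℝ × ℝ => V z.1 z.2))) := cWyy.differentiable one_ne_zero
  have dWyx : Differentiable ℝ (pd1 (pd2 (fun z : ℝ × ℝ => V z.1 z.2))) := cWyx.differentiable one_ne_zero
  have dG1 : Differentiable ℝ (fun z : ℝ × ℝ => g₁ z.1 z.2) := hg₁.differentiable (by norm_num)
  have dG2 : Differentiable ℝ (fun z : ℝ × ℝ => g₂ z.1 z.2) := hg₂.differentiable (by norm_num)
  have cP : ContDiff ℝ 2 (fun w : ℝ × ℝ => 3 * (-A₃₀₀ * w.2 ^ 3 + A₂₁₀ * w.2 ^ 2 - A₁₂₀ * w.2 + A₀₃₀) * pd1 (fun z : ℝ × ℝ => V z.1 z.2) w + (3 * A₃₀₀ * w.1 * w.2 ^ 2 - 2 * A₂₁₀ * w.1 * w.2 + A₂₀₁ * w.2 ^ 2 + A₁₂₀ * w.1 - A₁₁₁ * w.2 + A₀₂₁) * pd2 (fun z : ℝ × ℝ => V z.1 z.2) w) :=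
    ContDiff.add (ContDiff.mul (by fun_prop) cWx) (ContDiff.mul (by fun_prop) cWy)
  have cQ : ContDiff ℝ 2 (fun w : ℝ × ℝ => (-3 * A₃₀₀ * w.1 ^ 2 * w.2 + A₂₁₀ * w.1 ^ 2 - 2 * A₂₀₁ * w.1 * w.2 + A₁₁₁ * w.1 - A₁₀₂ * w.2 + A₀₁₂) * pd1 (fun z : ℝ × ℝ => V z.1 z.2) w + 3 * (A₃₀₀ * w.1 ^ 3 + A₂₀₁ * w.1 ^ 2 + A₁₀₂ * w.1 + A₀₀₃) * pd2 (fun z : ℝ × ℝ => V z.1 z.2) w) :=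
    ContDiff.add (ContDiff.mul (by fun_prop) cWx) (ContDiff.mul (by fun_prop) cWy)
  have cR : ContDiff ℝ 2 (fun w : ℝ × ℝ => 2 * ((3 * A₃₀₀ * w.1 * w.2 ^ 2 - 2 * A₂₁₀ * w.1 * w.2 + A₂₀₁ * w.2 ^ 2 + A₁₂₀ * w.1 - A₁₁₁ * w.2 + A₀₂₁) * pd1 (fun z : ℝ × ℝ => V z.1 z.2) w + (-3 * A₃₀₀ * w.1 ^ 2 * w.2 + A₂₁₀ * w.1 ^ 2 - 2 * A₂₀₁ * w.1 * w.2 + A₁₁₁ * w.1 - A₁₀₂ * w.2 + A₀₁₂) * pd2 (fun z : ℝ × ℝ => V z.1 z.2) w)) :=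
    ContDiff.mul contDiff_const
      (ContDiff.add (ContDiff.mul (by fun_prop) cWx) (ContDiff.mul (by fun_prop) cWy))
  have dP : Differentiable ℝ (fun w : ℝ × ℝ => 3 * (-A₃₀₀ * w.2 ^ 3 + A₂₁₀ * w.2 ^ 2 - A₁₂₀ * w.2 + A₀₃₀) * pd1 (fun z : ℝ × ℝ => V z.1 z.2) w + (3 * A₃₀₀ * w.1 * w.2 ^ 2 - 2 * A₂₁₀ * w.1 * w.2 + A₂₀₁ * w.2 ^ 2 + A₁₂₀ * w.1 - A₁₁₁ * w.2 + A₀₂₁) * pd2 (fun z : ℝ × ℝ => V z.1 z.2) w) := cP.differentiable (by norm_num)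
  have dQ : Differentiable ℝ (fun w : ℝ × ℝ => (-3 * A₃₀₀ * w.1 ^ 2 * w.2 + A₂₁₀ * w.1 ^ 2 - 2 * A₂₀₁ * w.1 * w.2 + A₁₁₁ * w.1 - A₁₀₂ * w.2 + A₀₁₂) * pd1 (fun z : ℝ × ℝ => V z.1 z.2) w + 3 * (A₃₀₀ * w.1 ^ 3 + A₂₀₁ * w.1 ^ 2 + A₁₀₂ * w.1 + A₀₀₃) * pd2 (fun z : ℝ × ℝ => V z.1 z.2) w) := cQ.differentiable (by norm_num)
  have dR : Differentiable ℝ (fun w : ℝ × ℝ => 2 * ((3 * A₃₀₀ * w.1 * w.2 ^ 2 - 2 * A₂₁₀ * w.1 * w.2 + A₂₀₁ * w.2 ^ 2 + A₁₂₀ * w.1 - A₁₁₁ * w.2 + A₀₂₁) * pd1 (fun z : ℝ × ℝ => V z.1 z.2) w + (-3 * A₃₀₀ * w.1 ^ 2 * w.2 + A₂₁₀ * w.1 ^ 2 - 2 * A₂₀₁ * w.1 * w.2 + A₁₁₁ * w.1 - A₁₀₂ * w.2 + A₀₁₂) * pd2 (fun z : ℝ × ℝ => V z.1 z.2) w)) :=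 cR.differentiable (by norm_num)
  have dP2 : Differentiable ℝ (pd2 (fun w : ℝ × ℝ => 3 * (-A₃₀₀ * w.2 ^ 3 + A₂₁₀ * w.2 ^ 2 - A₁₂₀ * w.2 + A₀₃₀) * pd1 (fun z : ℝ × ℝ => V z.1 z.2) w + (3 * A₃₀₀ * w.1 * w.2 ^ 2 - 2 * A₂₁₀ * w.1 * w.2 + A₂₀₁ * w.2 ^ 2 + A₁₂₀ * w.1 - A₁₁₁ * w.2 + A₀₂₁) * pd2 (fun z : ℝ × ℝ => V z.1 z.2) w)) := (contDiff_pd2 cP (by norm_num)).differentiable one_ne_zero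
  have dQ1 : Differentiable ℝ (pd1 (fun w : ℝ × ℝ => (-3 * A₃₀₀ * w.1 ^ 2 * w.2 + A₂₁₀ * w.1 ^ 2 - 2 * A₂₀₁ * w.1 * w.2 + A₁₁₁ * w.1 - A₁₀₂ * w.2 + A₀₁₂) * pd1 (fun z : ℝ × ℝ => V z.1 z.2) w + 3 * (A₃₀₀ * w.1 ^ 3 + A₂₀₁ * w.1 ^ 2 + A₁₀₂ * w.1 + A₀₀₃) * pd2 (fun z : ℝ × ℝ => V z.1 z.2) w)) := (contDiff_pd1 cQ (by norm_num)).differentiable one_ne_zero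
  have dR2 : Differentiable ℝ (pd2 (fun w : ℝ × ℝ => 2 * ((3 * A₃₀₀ * w.1 * w.2 ^ 2 - 2 * A₂₁₀ * w.1 * w.2 + A₂₀₁ * w.2 ^ 2 + A₁₂₀ * w.1 - A₁₁₁ * w.2 + A₀₂₁) * pd1 (fun z : ℝ × ℝ => V z.1 z.2) w + (-3 * A₃₀₀ * w.1 ^ 2 * w.2 + A₂₁₀ * w.1 ^ 2 - 2 * A₂₀₁ * w.1 * w.2 + A₁₁₁ * w.1 - A₁₀₂ * w.2 + A₀₁₂) * pd2 (fun z : ℝ × ℝ => V z.1 z.2) w))) := (contDiff_pd2 cR (by norm_num)).differentiable one_ne_zero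
  -- the three equations in pd form
  have e1 : ∀ w : ℝ × ℝ, pd1 (fun z : ℝ × ℝ => g₁ z.1 z.2) w = (fun w : ℝ × ℝ => 3 * (-A₃₀₀ * w.2 ^ 3 + A₂₁₀ * w.2 ^ 2 - A₁₂₀ * w.2 + A₀₃₀) * pd1 (fun z : ℝ × ℝ => V z.1 z.2) w + (3 * A₃₀₀ * w.1 * w.2 ^ 2 - 2 * A₂₁₀ * w.1 * w.2 + A₂₀₁ * w.2 ^ 2 + A₁₂₀ * w.1 - A₁₁₁ * w.2 + A₀₂₁) * pd2 (fun z : ℝ × ℝ => V z.1 z.2) w) w := by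
    rintro ⟨a, b⟩
    have L0 : deriv (fun t => g₁ t b) a = pd1 (fun z : ℝ × ℝ => g₁ z.1 z.2) (a, b) :=
      deriv_slice1 (dG1 (a, b))
    have Lx : deriv (fun t => V t b) a = pd1 (fun z : ℝ × ℝ => V z.1 z.2) (a, b) := deriv_slice1 (dW (a, b))
    have Ly : deriv (fun t => V a t) b = pd2 (fun z : ℝ × ℝ => V z.1 z.2) (a, b) := deriv_slice2 (dW (a, b))
    have h2 := heq2 a b
    rw [L0, Lx, Ly] at h2
    exact h2
  have e2 : ∀ w : ℝ × ℝ, pd2 (fun z : ℝ × ℝ => g₂ z.1 z.2) w = (fun w : ℝ × ℝ => (-3 * A₃₀₀ * w.1 ^ 2 * w.2 + A₂₁₀ * w.1 ^ 2 - 2 * A₂₀₁ * w.1 * w.2 + A₁₁₁ * w.1 - A₁₀₂ * w.2 + A₀₁₂) * pd1 (fun z : ℝ × ℝ => V z.1 z.2) w + 3 * (A₃₀₀ * w.1 ^ 3 + A₂₀₁ * w.1 ^ 2 + A₁₀₂ * w.1 + A₀₀₃) * pd2 (fun z : ℝ × ℝ => V z.1 z.2) w) w := by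
    rintro ⟨a, b⟩
    have L0 : deriv (fun t => g₂ a t) b = pd2 (fun z : ℝ × ℝ => g₂ z.1 z.2) (a, b) :=
      deriv_slice2 (dG2 (a, b))
    have Lx : deriv (fun t => V t b) a = pd1 (fun z : ℝ × ℝ => V z.1 z.2) (a, b) := deriv_slice1 (dW (a, b))
    have Ly : deriv (fun t => V a t) b = pd2 (fun z : ℝ × ℝ => V z.1 z.2) (a, b) := deriv_slice2 (dW (a, b))
    have h3 := heq3 a b
    rw [L0, Lx, Ly] at h3
    exact h3
  have e3 : ∀ w : ℝ × ℝ, pd2 (fun z : ℝ × ℝ => g₁ z.1 z.2) w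
      + pd1 (fun z : ℝ × ℝ => g₂ z.1 z.2) w = (fun w : ℝ × ℝ => 2 * ((3 * A₃₀₀ * w.1 * w.2 ^ 2 - 2 * A₂₁₀ * w.1 * w.2 + A₂₀₁ * w.2 ^ 2 + A₁₂₀ * w.1 - A₁₁₁ * w.2 + A₀₂₁) * pd1 (fun z : ℝ × ℝ => V z.1 z.2) w + (-3 * A₃₀₀ * w.1 ^ 2 * w.2 + A₂₁₀ * w.1 ^ 2 - 2 * A₂₀₁ * w.1 * w.2 + A₁₁₁ * w.1 - A₁₀₂ * w.2 + A₀₁₂) * pd2 (fun z : ℝ × ℝ => V z.1 z.2) w)) w := by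
    rintro ⟨a, b⟩
    have L0 : deriv (fun t => g₁ a t) b = pd2 (fun z : ℝ × ℝ => g₁ z.1 z.2) (a, b) :=
      deriv_slice2 (dG1 (a, b))
    have L1 : deriv (fun t => g₂ t b) a = pd1 (fun z : ℝ × ℝ => g₂ z.1 z.2) (a, b) :=
      deriv_slice1 (dG2 (a, b))
    have Lx : deriv (fun t => V t b) a = pd1 (fun z : ℝ × ℝ => V z.1 z.2) (a, b) := deriv_slice1 (dW (a, b))
    have Ly : deriv (fun t => V a t) b = pd2 (fun z : ℝ × ℝ => V z.1 z.2) (a, b) := deriv_slice2 (dW (a, b))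
    have h4 := heq4 a b
    rw [L0, L1, Lx, Ly] at h4
    exact h4
  -- expansions of the derivatives of P, Q, R
  have hP2 : ∀ a b : ℝ, pd2 (fun w : ℝ × ℝ => 3 * (-A₃₀₀ * w.2 ^ 3 + A₂₁₀ * w.2 ^ 2 - A₁₂₀ * w.2 + A₀₃₀) * pd1 (fun z : ℝ × ℝ => V z.1 z.2) w + (3 * A₃₀₀ * w.1 * w.2 ^ 2 - 2 * A₂₁₀ * w.1 * w.2 + A₂₀₁ * w.2 ^ 2 + A₁₂₀ * w.1 - A₁₁₁ * w.2 + A₀₂₁) * pd2 (fun z : ℝ × ℝ => V z.1 z.2) w) (a, b) = 3 * (-3 * A₃₀₀ * b ^ 2 + 2 * A₂₁₀ * b - A₁₂₀) * pd1 (fun z : ℝ × ℝ => V z.1 z.2) (a, b) + 3 * (-A₃₀₀ * b ^ 3 + A₂₁₀ * b ^ 2 - A₁₂₀ * b + A₀₃₀) * pd2 (pd1 (fun z : ℝ × ℝ => V z.1 z.2)) (a, b) + (6 * A₃₀₀ * a * b - 2 * A₂₁₀ * a + 2 * A₂₀₁ * b - A₁₁₁) * pd2 (fun z : ℝ × ℝ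 => V z.1 z.2) (a, b) + (3 * A₃₀₀ * a * b ^ 2 - 2 * A₂₁₀ * a * b + A₂₀₁ * b ^ 2 + A₁₂₀ * a - A₁₁₁ * b + A₀₂₁) * pd2 (pd2 (fun z : ℝ × ℝ => V z.1 z.2)) (a, b) := by
    intro a b
    refine pd2_eq_of_hasDerivAt (dP (a, b)) ?_
    exact ((((((((hasDerivAt_pow 3 b).const_mul (-A₃₀₀)).add ((hasDerivAt_pow 2 b).const_mul (A₂₁₀))).sub ((hasDerivAt_id' b).const_mul (A₁₂₀))).add_const (A₀₃₀)).const_mul (3)).mul (hasDerivAt_slice2 (dWx (a, b)))).add ((((((((hasDerivAt_pow 2 b).const_mul (3 * A₃₀₀ * a)).sub ((hasDerivAt_id' b).const_mul (2 * A₂₁₀ * a))).add ((hasDerivAt_pow 2 b).const_mul (A₂₀₁))).add_const (A₁₂₀ * a)).sub ((hasDerivAt_id' b).const_mul (A₁₁₁))).add_const (A₀₂₁)).mul (hasDerivAt_slice2 (dWy (a, b))))).congr_deriv (by simp only [Pi.add_apply, Pi.sub_apply, Pi.neg_apply]; push_cast; ring)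
  have hP22 : ∀ a b : ℝ, pd2 (pd2 (fun w : ℝ × ℝ => 3 * (-A₃₀₀ * w.2 ^ 3 + A₂₁₀ * w.2 ^ 2 - A₁₂₀ * w.2 + A₀₃₀) * pd1 (fun z : ℝ × ℝ => V z.1 z.2) w + (3 * A₃₀₀ * w.1 * w.2 ^ 2 - 2 * A₂₁₀ * w.1 * w.2 + A₂₀₁ * w.2 ^ 2 + A₁₂₀ * w.1 - A₁₁₁ * w.2 + A₀₂₁) * pd2 (fun z : ℝ × ℝ => V z.1 z.2) w)) (a, b) = 3 * (-6 * A₃₀₀ * b + 2 * A₂₁₀) * pd1 (fun z : ℝ × ℝ => V z.1 z.2) (a, b) + 6 * (-3 * A₃₀₀ * b ^ 2 + 2 * A₂₁₀ * b - A₁₂₀) * pd2 (pd1 (fun z : ℝ × ℝ => V z.1 z.2)) (a, b) + 3 * (-A₃₀₀ * b ^ 3 + A₂₁₀ * b ^ 2 - A₁₂₀ * b + A₀₃₀) * pd2 (pd2 (pd1 (fun z : ℝ × ℝ => V z.1 z.2))) (a, b) + (6 * A₃₀₀ * a + 2 * A₂₀₁) * pd2 (fun z : ℝ × ℝ => V z.1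 z.2) (a, b) + 2 * (6 * A₃₀₀ * a * b - 2 * A₂₁₀ * a + 2 * A₂₀₁ * b - A₁₁₁) * pd2 (pd2 (fun z : ℝ × ℝ => V z.1 z.2)) (a, b) + (3 * A₃₀₀ * a * b ^ 2 - 2 * A₂₁₀ * a * b + A₂₀₁ * b ^ 2 + A₁₂₀ * a - A₁₁₁ * b + A₀₂₁) * pd2 (pd2 (pd2 (fun z : ℝ × ℝ => V z.1 z.2))) (a, b) := by
    intro a b
    refine pd2_eq_of_hasDerivAt (dP2 (a, b)) ?_
    rw [show (fun t => pd2 (fun w : ℝ × ℝ => 3 * (-A₃₀₀ * w.2 ^ 3 + A₂₁₀ * w.2 ^ 2 - A₁₂₀ * w.2 + A₀₃₀) * pd1 (fun z : ℝ × ℝ => V z.1 z.2) w + (3 * A₃₀₀ * w.1 * w.2 ^ 2 - 2 * A₂₁₀ * w.1 * w.2 + A₂₀₁ * w.2 ^ 2 + A₁₂₀ * w.1 - A₁₁₁ * w.2 + A₀₂₁) * pd2 (fun z : ℝ × ℝ => V z.1 z.2) w) (a, t)) = (fun t => 3 * (-3 * A₃₀₀ * t ^ 2 + 2 * A₂₁₀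 * t - A₁₂₀) * pd1 (fun z : ℝ × ℝ => V z.1 z.2) (a, t) + 3 * (-A₃₀₀ * t ^ 3 + A₂₁₀ * t ^ 2 - A₁₂₀ * t + A₀₃₀) * pd2 (pd1 (fun z : ℝ × ℝ => V z.1 z.2)) (a, t) + (6 * A₃₀₀ * a * t - 2 * A₂₁₀ * a + 2 * A₂₀₁ * t - A₁₁₁) * pd2 (fun z : ℝ × ℝ => V z.1 z.2) (a, t) + (3 * A₃₀₀ * a * t ^ 2 - 2 * A₂₁₀ * a * t + A₂₀₁ * t ^ 2 + A₁₂₀ * a - A₁₁₁ * t + A₀₂₁) * pd2 (pd2 (fun z : ℝ × ℝ => V z.1 z.2)) (a, t)) from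
      funext fun t => hP2 a t]
    exact (((((((((hasDerivAt_pow 2 b).const_mul (-3 * A₃₀₀)).add ((hasDerivAt_id' b).const_mul (2 * A₂₁₀))).sub_const (A₁₂₀)).const_mul (3)).mul (hasDerivAt_slice2 (dWx (a, b)))).add (((((((hasDerivAt_pow 3 b).const_mul (-A₃₀₀)).add ((hasDerivAt_pow 2 b).const_mul (A₂₁₀))).sub ((hasDerivAt_id' b).const_mul (A₁₂₀))).add_const (A₀₃₀)).const_mul (3)).mul (hasDerivAt_slice2 (dWxy (a, b))))).add ((((((hasDerivAt_id' b).const_mul (6 * A₃₀₀ * a)).sub_const (2 * A₂₁₀ * a)).add ((hasDerivAt_id' b).const_mul (2 * A₂₀₁))).sub_const (A₁₁₁)).mul (hasDerivAt_slice2 (dWy (a, b))))).add ((((((((hasDerivAt_pow 2 b).const_mul (3 * A₃₀₀ * a)).sub ((hasDerivAt_id' b).const_mul (2 * A₂₁₀ * a))).add ((hasDerivAt_pow 2 b).const_mul (A₂₀₁))).add_const (A₁₂₀ * a)).sub ((hasDerivAt_id' b).const_mul (A₁₁₁))).add_const (A₀₂₁)).mul (hasDerivAt_slice2 (dWyy (a,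 b))))).congr_deriv (by simp only [Pi.add_apply, Pi.sub_apply, Pi.neg_apply]; push_cast; ring)
  have hQ1 : ∀ a b : ℝ, pd1 (fun w : ℝ × ℝ => (-3 * A₃₀₀ * w.1 ^ 2 * w.2 + A₂₁₀ * w.1 ^ 2 - 2 * A₂₀₁ * w.1 * w.2 + A₁₁₁ * w.1 - A₁₀₂ * w.2 + A₀₁₂) * pd1 (fun z : ℝ × ℝ => V z.1 z.2) w + 3 * (A₃₀₀ * w.1 ^ 3 + A₂₀₁ * w.1 ^ 2 + A₁₀₂ * w.1 + A₀₀₃) * pd2 (fun z : ℝ × ℝ => V z.1 z.2) w) (a, b) = (-6 * A₃₀₀ * a * b + 2 * A₂₁₀ * a - 2 * A₂₀₁ * b + A₁₁₁) * pd1 (fun z : ℝ × ℝ => V z.1 z.2) (a, b) + (-3 * A₃₀₀ * a ^ 2 * b + A₂₁₀ * a ^ 2 - 2 * A₂₀₁ * a * b + A₁₁₁ * a - A₁₀₂ * b + A₀₁₂) * pd1 (pd1 (fun z : ℝ × ℝ => V z.1 z.2)) (a, b) + 3 * (3 * A₃₀₀ * a ^ 2 + 2 * A₂₀₁ * a + A₁₀₂)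 * pd2 (fun z : ℝ × ℝ => V z.1 z.2) (a, b) + 3 * (A₃₀₀ * a ^ 3 + A₂₀₁ * a ^ 2 + A₁₀₂ * a + A₀₀₃) * pd1 (pd2 (fun z : ℝ × ℝ => V z.1 z.2)) (a, b) := by
    intro a b
    refine pd1_eq_of_hasDerivAt (dQ (a, b)) ?_
    exact ((((((((((hasDerivAt_pow 2 a).const_mul (-3 * A₃₀₀)).mul_const (b)).add ((hasDerivAt_pow 2 a).const_mul (A₂₁₀))).sub (((hasDerivAt_id' a).const_mul (2 * A₂₀₁)).mul_const (b))).add ((hasDerivAt_id' a).const_mul (A₁₁₁))).sub_const (A₁₀₂ * b)).add_const (A₀₁₂)).mul (hasDerivAt_slice1 (dWx (a, b)))).add (((((((hasDerivAt_pow 3 a).const_mul (A₃₀₀)).add ((hasDerivAt_pow 2 a).const_mul (A₂₀₁))).add ((hasDerivAt_id' a).const_mul (A₁₀₂))).add_const (A₀₀₃)).const_mul (3)).mul (hasDerivAt_slice1 (dWy (a, b))))).congr_deriv (by simp only [Pi.add_apply, Pi.sub_apply, Pi.neg_apply]; push_cast; ring)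
  have hQ11 : ∀ a b : ℝ, pd1 (pd1 (fun w : ℝ × ℝ => (-3 * A₃₀₀ * w.1 ^ 2 * w.2 + A₂₁₀ * w.1 ^ 2 - 2 * A₂₀₁ * w.1 * w.2 + A₁₁₁ * w.1 - A₁₀₂ * w.2 + A₀₁₂) * pd1 (fun z : ℝ × ℝ => V z.1 z.2) w + 3 * (A₃₀₀ * w.1 ^ 3 + A₂₀₁ * w.1 ^ 2 + A₁₀₂ * w.1 + A₀₀₃) * pd2 (fun z : ℝ × ℝ => V z.1 z.2) w)) (a, b) = (-6 * A₃₀₀ * b + 2 * A₂₁₀) * pd1 (fun z : ℝ × ℝ => V z.1 z.2) (a, b) + 2 * (-6 * A₃₀₀ * a * b + 2 * A₂₁₀ * a - 2 * A₂₀₁ * b + A₁₁₁) * pd1 (pd1 (fun z : ℝ × ℝ => V z.1 z.2)) (a, b) + (-3 * A₃₀₀ * a ^ 2 * b + A₂₁₀ * a ^ 2 - 2 * A₂₀₁ * a * b + A₁₁₁ * a - A₁₀₂ * b + A₀₁₂) * pd1 (pd1 (pd1 (fun z : ℝ × ℝ => V z.1 z.2))) (a, b) + 3 * (6 * A₃₀₀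 * a + 2 * A₂₀₁) * pd2 (fun z : ℝ × ℝ => V z.1 z.2) (a, b) + 6 * (3 * A₃₀₀ * a ^ 2 + 2 * A₂₀₁ * a + A₁₀₂) * pd1 (pd2 (fun z : ℝ × ℝ => V z.1 z.2)) (a, b) + 3 * (A₃₀₀ * a ^ 3 + A₂₀₁ * a ^ 2 + A₁₀₂ * a + A₀₀₃) * pd1 (pd1 (pd2 (fun z : ℝ × ℝ => V z.1 z.2))) (a, b) := by
    intro a b
    refine pd1_eq_of_hasDerivAt (dQ1 (a, b)) ?_
    rw [show (fun t => pd1 (fun w : ℝ × ℝ => (-3 * A₃₀₀ * w.1 ^ 2 * w.2 + A₂₁₀ * w.1 ^ 2 - 2 * A₂₀₁ * w.1 * w.2 + A₁₁₁ * w.1 - A₁₀₂ * w.2 + A₀₁₂) * pd1 (fun z : ℝ × ℝ => V z.1 z.2) w + 3 * (A₃₀₀ * w.1 ^ 3 + A₂₀₁ * w.1 ^ 2 + A₁₀₂ * w.1 + A₀₀₃) * pd2 (fun z : ℝ × ℝ => V z.1 z.2) w) (t, b)) = (fun t => (-6 * A₃₀₀ * t * b + 2 * A₂₁₀ * t - 2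 * A₂₀₁ * b + A₁₁₁) * pd1 (fun z : ℝ × ℝ => V z.1 z.2) (t, b) + (-3 * A₃₀₀ * t ^ 2 * b + A₂₁₀ * t ^ 2 - 2 * A₂₀₁ * t * b + A₁₁₁ * t - A₁₀₂ * b + A₀₁₂) * pd1 (pd1 (fun z : ℝ × ℝ => V z.1 z.2)) (t, b) + 3 * (3 * A₃₀₀ * t ^ 2 + 2 * A₂₀₁ * t + A₁₀₂) * pd2 (fun z : ℝ × ℝ => V z.1 z.2) (t, b) + 3 * (A₃₀₀ * t ^ 3 + A₂₀₁ * t ^ 2 + A₁₀₂ * t + A₀₀₃) * pd1 (pd2 (fun z : ℝ × ℝ => V z.1 z.2)) (t, b)) from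
      funext fun t => hQ1 t b]
    exact ((((((((((hasDerivAt_id' a).const_mul (-6 * A₃₀₀)).mul_const (b)).add ((hasDerivAt_id' a).const_mul (2 * A₂₁₀))).sub_const (2 * A₂₀₁ * b)).add_const (A₁₁₁)).mul (hasDerivAt_slice1 (dWx (a, b)))).add (((((((((hasDerivAt_pow 2 a).const_mul (-3 * A₃₀₀)).mul_const (b)).add ((hasDerivAt_pow 2 a).const_mul (A₂₁₀))).sub (((hasDerivAt_id' a).const_mul (2 * A₂₀₁)).mul_const (b))).add ((hasDerivAt_id' a).const_mul (A₁₁₁))).sub_const (A₁₀₂ * b)).add_const (A₀₁₂)).mul (hasDerivAt_slice1 (dWxx (a, b))))).add ((((((hasDerivAt_pow 2 a).const_mul (3 * A₃₀₀)).add ((hasDerivAt_id' a).const_mul (2 * A₂₀₁))).add_const (A₁₀₂)).const_mul (3)).mul (hasDerivAt_slice1 (dWy (a, b))))).add (((((((hasDerivAt_pow 3 a).const_mul (A₃₀₀)).add ((hasDerivAt_pow 2 a).const_mul (A₂₀₁))).add ((hasDerivAt_id' a).const_mul (A₁₀₂))).add_const (A₀₀₃)).const_mul (3)).mul (hasDerivAt_slice1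 (dWyx (a, b))))).congr_deriv (by simp only [Pi.add_apply, Pi.sub_apply, Pi.neg_apply]; push_cast; ring)
  have hR2 : ∀ a b : ℝ, pd2 (fun w : ℝ × ℝ => 2 * ((3 * A₃₀₀ * w.1 * w.2 ^ 2 - 2 * A₂₁₀ * w.1 * w.2 + A₂₀₁ * w.2 ^ 2 + A₁₂₀ * w.1 - A₁₁₁ * w.2 + A₀₂₁) * pd1 (fun z : ℝ × ℝ => V z.1 z.2) w + (-3 * A₃₀₀ * w.1 ^ 2 * w.2 + A₂₁₀ * w.1 ^ 2 - 2 * A₂₀₁ * w.1 * w.2 + A₁₁₁ * w.1 - A₁₀₂ * w.2 + A₀₁₂) * pd2 (fun z : ℝ × ℝ => V z.1 z.2) w)) (a, b) = 2 * ((6 * A₃₀₀ * a * b - 2 * A₂₁₀ * a + 2 * A₂₀₁ * b - A₁₁₁) * pd1 (fun z : ℝ × ℝ => V z.1 z.2) (a, b) + (3 * A₃₀₀ * a * b ^ 2 - 2 * A₂₁₀ * a * b + A₂₀₁ * b ^ 2 + A₁₂₀ * a - A₁₁₁ * b + A₀₂₁) * pd2 (pd1 (fun z : ℝ × ℝ =>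 V z.1 z.2)) (a, b) + (-3 * A₃₀₀ * a ^ 2 - 2 * A₂₀₁ * a - A₁₀₂) * pd2 (fun z : ℝ × ℝ => V z.1 z.2) (a, b) + (-3 * A₃₀₀ * a ^ 2 * b + A₂₁₀ * a ^ 2 - 2 * A₂₀₁ * a * b + A₁₁₁ * a - A₁₀₂ * b + A₀₁₂) * pd2 (pd2 (fun z : ℝ × ℝ => V z.1 z.2)) (a, b)) := by
    intro a b
    refine pd2_eq_of_hasDerivAt (dR (a, b)) ?_
    exact ((((((((((hasDerivAt_pow 2 b).const_mul (3 * A₃₀₀ * a)).sub ((hasDerivAt_id' b).const_mul (2 * A₂₁₀ * a))).add ((hasDerivAt_pow 2 b).const_mul (A₂₀₁))).add_const (A₁₂₀ * a)).sub ((hasDerivAt_id' b).const_mul (A₁₁₁))).add_const (A₀₂₁)).mul (hasDerivAt_slice2 (dWx (a, b)))).add ((((((((hasDerivAt_id' b).const_mul (-3 * A₃₀₀ * a ^ 2)).add_const (A₂₁₀ * a ^ 2)).sub ((hasDerivAt_id' b).const_mul (2 * A₂₀₁ * a))).add_const (A₁₁₁ * a)).sub ((hasDerivAt_id' b).const_mul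 (A₁₀₂))).add_const (A₀₁₂)).mul (hasDerivAt_slice2 (dWy (a, b))))).const_mul (2)).congr_deriv (by simp only [Pi.add_apply, Pi.sub_apply, Pi.neg_apply]; push_cast; ring)
  have hR21 : ∀ a b : ℝ, pd1 (pd2 (fun w : ℝ × ℝ => 2 * ((3 * A₃₀₀ * w.1 * w.2 ^ 2 - 2 * A₂₁₀ * w.1 * w.2 + A₂₀₁ * w.2 ^ 2 + A₁₂₀ * w.1 - A₁₁₁ * w.2 + A₀₂₁) * pd1 (fun z : ℝ × ℝ => V z.1 z.2) w + (-3 * A₃₀₀ * w.1 ^ 2 * w.2 + A₂₁₀ * w.1 ^ 2 - 2 * A₂₀₁ * w.1 * w.2 + A₁₁₁ * w.1 - A₁₀₂ * w.2 + A₀₁₂) * pd2 (fun z : ℝ × ℝ => V z.1 z.2) w))) (a, b) = 2 * ((6 * A₃₀₀ * b - 2 * A₂₁₀) * pd1 (fun z : ℝ × ℝ => V z.1 z.2) (a, b) + (6 * A₃₀₀ * a * b - 2 * A₂₁₀ * a + 2 * A₂₀₁ * b - A₁₁₁) * pd1 (pd1 (fun z : ℝ × ℝ => V z.1 z.2)) (a,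 b) + (3 * A₃₀₀ * b ^ 2 - 2 * A₂₁₀ * b + A₁₂₀) * pd2 (pd1 (fun z : ℝ × ℝ => V z.1 z.2)) (a, b) + (3 * A₃₀₀ * a * b ^ 2 - 2 * A₂₁₀ * a * b + A₂₀₁ * b ^ 2 + A₁₂₀ * a - A₁₁₁ * b + A₀₂₁) * pd1 (pd2 (pd1 (fun z : ℝ × ℝ => V z.1 z.2))) (a, b) + (-6 * A₃₀₀ * a - 2 * A₂₀₁) * pd2 (fun z : ℝ × ℝ => V z.1 z.2) (a, b) + (-3 * A₃₀₀ * a ^ 2 - 2 * A₂₀₁ * a - A₁₀₂) * pd1 (pd2 (fun z : ℝ × ℝ => V z.1 z.2)) (a, b) + (-6 * A₃₀₀ * a * b + 2 * A₂₁₀ * a - 2 * A₂₀₁ * b + A₁₁₁) * pd2 (pd2 (fun z : ℝ × ℝ => V z.1 z.2)) (a, b) + (-3 * A₃₀₀ * a ^ 2 * b + A₂₁₀ * a ^ 2 - 2 * A₂₀₁ * a * b + A₁₁₁ * a - A₁₀₂ * b + A₀₁₂) * pd1 (pd2 (pd2 (fun z : ℝ × ℝ => V z.1 z.2))) (a, b))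 := by
    intro a b
    refine pd1_eq_of_hasDerivAt (dR2 (a, b)) ?_
    rw [show (fun t => pd2 (fun w : ℝ × ℝ => 2 * ((3 * A₃₀₀ * w.1 * w.2 ^ 2 - 2 * A₂₁₀ * w.1 * w.2 + A₂₀₁ * w.2 ^ 2 + A₁₂₀ * w.1 - A₁₁₁ * w.2 + A₀₂₁) * pd1 (fun z : ℝ × ℝ => V z.1 z.2) w + (-3 * A₃₀₀ * w.1 ^ 2 * w.2 + A₂₁₀ * w.1 ^ 2 - 2 * A₂₀₁ * w.1 * w.2 + A₁₁₁ * w.1 - A₁₀₂ * w.2 + A₀₁₂) * pd2 (fun z : ℝ × ℝ => V z.1 z.2) w)) (t, b)) = (fun t => 2 * ((6 * A₃₀₀ * t * b - 2 * A₂₁₀ * t + 2 * A₂₀₁ * b - A₁₁₁) * pd1 (fun z : ℝ × ℝ => V z.1 z.2) (t, b) + (3 * A₃₀₀ * t * b ^ 2 - 2 * A₂₁₀ * t * b + A₂₀₁ * b ^ 2 + A₁₂₀ * t - A₁₁₁ * b + A₀₂₁) * pd2 (pd1 (fun z : ℝ × ℝ => V z.1 z.2)) (t, b) + (-3 * A₃₀₀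 * t ^ 2 - 2 * A₂₀₁ * t - A₁₀₂) * pd2 (fun z : ℝ × ℝ => V z.1 z.2) (t, b) + (-3 * A₃₀₀ * t ^ 2 * b + A₂₁₀ * t ^ 2 - 2 * A₂₀₁ * t * b + A₁₁₁ * t - A₁₀₂ * b + A₀₁₂) * pd2 (pd2 (fun z : ℝ × ℝ => V z.1 z.2)) (t, b))) from
      funext fun t => hR2 t b]
    exact (((((((((((hasDerivAt_id' a).const_mul (6 * A₃₀₀)).mul_const (b)).sub ((hasDerivAt_id' a).const_mul (2 * A₂₁₀))).add_const (2 * A₂₀₁ * b)).sub_const (A₁₁₁)).mul (hasDerivAt_slice1 (dWx (a, b)))).add (((((((((hasDerivAt_id' a).const_mul (3 * A₃₀₀)).mul_const (b ^ 2)).sub (((hasDerivAt_id' a).const_mul (2 * A₂₁₀)).mul_const (b))).add_const (A₂₀₁ * b ^ 2)).add ((hasDerivAt_id' a).const_mul (A₁₂₀))).sub_const (A₁₁₁ * b)).add_const (A₀₂₁)).mul (hasDerivAt_slice1 (dWxy (a, b))))).add (((((hasDerivAt_pow 2 a).const_mul (-3 * A₃₀₀)).sub ((hasDerivAt_id' a).const_mul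 (2 * A₂₀₁))).sub_const (A₁₀₂)).mul (hasDerivAt_slice1 (dWy (a, b))))).add (((((((((hasDerivAt_pow 2 a).const_mul (-3 * A₃₀₀)).mul_const (b)).add ((hasDerivAt_pow 2 a).const_mul (A₂₁₀))).sub (((hasDerivAt_id' a).const_mul (2 * A₂₀₁)).mul_const (b))).add ((hasDerivAt_id' a).const_mul (A₁₁₁))).sub_const (A₁₀₂ * b)).add_const (A₀₁₂)).mul (hasDerivAt_slice1 (dWyy (a, b))))).const_mul (2)).congr_deriv (by simp only [Pi.add_apply, Pi.sub_apply, Pi.neg_apply]; push_cast; ring)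
  -- symmetry of mixed partial derivatives of V
  have N1 : ∀ w : ℝ × ℝ, pd2 (pd1 (fun z : ℝ × ℝ => V z.1 z.2)) w = pd1 (pd2 (fun z : ℝ × ℝ => V z.1 z.2)) w := fun w =>
    schwarz_master (z := w) dW (fun _ => rfl) (fun _ => rfl) (dWx w) (dWy w)
  have N4 : ∀ w : ℝ × ℝ, pd2 (pd1 (pd1 (fun z : ℝ × ℝ => V z.1 z.2))) w = pd1 (pd2 (pd1 (fun z : ℝ × ℝ => V z.1 z.2))) w := fun w =>
    schwarz_master (z := w) dWx (fun _ => rfl) (fun _ => rfl) (dWxx w) (dWxy w)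
  have N5 : ∀ w : ℝ × ℝ, pd2 (pd1 (pd2 (fun z : ℝ × ℝ => V z.1 z.2))) w = pd1 (pd2 (pd2 (fun z : ℝ × ℝ => V z.1 z.2))) w := fun w =>
    schwarz_master (z := w) dWy (fun _ => rfl) (fun _ => rfl) (dWyx w) (dWyy w)
  -- the key compatibility relation
  have key := compat hg₁ hg₂ cP cQ cR e1 e2 e3 (x, y)
  rw [hP22 x y, hQ11 x y, hR21 x y] at key
  rw [show pd1 (pd2 (pd2 (fun z : ℝ × ℝ => V z.1 z.2))) = pd2 (pd1 (pd2 (fun z : ℝ × ℝ => V z.1 z.2))) from funext fun w => (N5 w).symm] at key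
  rw [show pd1 (pd2 (fun z : ℝ × ℝ => V z.1 z.2)) = pd2 (pd1 (fun z : ℝ × ℝ => V z.1 z.2)) from funext fun w => (N1 w).symm] at key
  rw [show pd1 (pd2 (pd1 (fun z : ℝ × ℝ => V z.1 z.2))) = pd2 (pd1 (pd1 (fun z : ℝ × ℝ => V z.1 z.2))) from funext fun w => (N4 w).symm] at key
  -- rewrite the goal into canonical partial derivatives
  have sA1 : ∀ q : ℝ, deriv (fun t => V t q) = fun p => pd1 (fun z : ℝ × ℝ => V z.1 z.2) (p, q) :=
    fun q => funext fun p => deriv_slice1 (dW (p, q))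
  have sA2 : ∀ p : ℝ, deriv (fun t => V p t) = fun q => pd2 (fun z : ℝ × ℝ => V z.1 z.2) (p, q) :=
    fun p => funext fun q => deriv_slice2 (dW (p, q))
  have sB1 : ∀ q : ℝ, deriv (fun t => pd1 (fun z : ℝ × ℝ => V z.1 z.2) (t, q)) = fun p => pd1 (pd1 (fun z : ℝ × ℝ => V z.1 z.2)) (p, q) :=
    fun q => funext fun p => deriv_slice1 (dWx (p, q))
  have sB2 : ∀ p : ℝ, deriv (fun t => pd1 (fun z : ℝ × ℝ => V z.1 z.2) (p, t)) = fun q => pd2 (pd1 (fun z : ℝ × ℝ => V z.1 z.2)) (p, q) :=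
    fun p => funext fun q => deriv_slice2 (dWx (p, q))
  have sC2 : ∀ p : ℝ, deriv (fun t => pd2 (fun z : ℝ × ℝ => V z.1 z.2) (p, t)) = fun q => pd2 (pd2 (fun z : ℝ × ℝ => V z.1 z.2)) (p, q) :=
    fun p => funext fun q => deriv_slice2 (dWy (p, q))
  have sD1 : ∀ q : ℝ, deriv (fun t => pd1 (pd1 (fun z : ℝ × ℝ => V z.1 z.2)) (t, q)) = fun p => pd1 (pd1 (pd1 (fun z : ℝ × ℝ => V z.1 z.2))) (p, q) :=
    fun q => funext fun p => deriv_slice1 (dWxx (p, q))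
  have sD2 : ∀ p : ℝ, deriv (fun t => pd1 (pd1 (fun z : ℝ × ℝ => V z.1 z.2)) (p, t)) = fun q => pd2 (pd1 (pd1 (fun z : ℝ × ℝ => V z.1 z.2))) (p, q) :=
    fun p => funext fun q => deriv_slice2 (dWxx (p, q))
  have sE2 : ∀ p : ℝ, deriv (fun t => pd2 (pd1 (fun z : ℝ × ℝ => V z.1 z.2)) (p, t)) = fun q => pd2 (pd2 (pd1 (fun z : ℝ × ℝ => V z.1 z.2))) (p, q) :=
    fun p => funext fun q => deriv_slice2 (dWxy (p, q))
  have sF2 : ∀ p : ℝ, deriv (fun t => pd2 (pd2 (fun z : ℝ × ℝ => V z.1 z.2)) (p, t)) = fun q => pd2 (pd2 (pd2 (fun z : ℝ × ℝ => V z.1 z.2))) (p, q) :=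
    fun p => funext fun q => deriv_slice2 (dWyy (p, q))
  -- derivatives of the polynomial coefficients
  have sd1 : deriv (fun s : ℝ => -A₃₀₀ * s ^ 3 + A₂₁₀ * s ^ 2 - A₁₂₀ * s + A₀₃₀)
      = fun t => -3 * A₃₀₀ * t ^ 2 + 2 * A₂₁₀ * t - A₁₂₀ :=
    funext fun t => ((((((hasDerivAt_pow 3 t).const_mul (-A₃₀₀)).add ((hasDerivAt_pow 2 t).const_mul (A₂₁₀))).sub ((hasDerivAt_id' t).const_mul (A₁₂₀))).add_const (A₀₃₀)).congr_deriv (by push_cast; ring)).deriv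
  have sd1p : deriv (fun s : ℝ => -3 * A₃₀₀ * s ^ 2 + 2 * A₂₁₀ * s - A₁₂₀)
      = fun t => -6 * A₃₀₀ * t + 2 * A₂₁₀ :=
    funext fun t => (((((hasDerivAt_pow 2 t).const_mul (-3 * A₃₀₀)).add ((hasDerivAt_id' t).const_mul (2 * A₂₁₀))).sub_const (A₁₂₀)).congr_deriv (by push_cast; ring)).deriv
  have sd2y : ∀ p : ℝ, deriv (fun t => 3 * A₃₀₀ * p * t ^ 2 - 2 * A₂₁₀ * p * t + A₂₀₁ * t ^ 2
      + A₁₂₀ * p - A₁₁₁ * t + A₀₂₁)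
      = fun t => 6 * A₃₀₀ * p * t - 2 * A₂₁₀ * p + 2 * A₂₀₁ * t - A₁₁₁ :=
    fun p => funext fun t => ((((((((hasDerivAt_pow 2 t).const_mul (3 * A₃₀₀ * p)).sub ((hasDerivAt_id' t).const_mul (2 * A₂₁₀ * p))).add ((hasDerivAt_pow 2 t).const_mul (A₂₀₁))).add_const (A₁₂₀ * p)).sub ((hasDerivAt_id' t).const_mul (A₁₁₁))).add_const (A₀₂₁)).congr_deriv (by push_cast; ring)).deriv
  have sd2x : ∀ q : ℝ, deriv (fun t => 3 * A₃₀₀ * t * q ^ 2 - 2 * A₂₁₀ * t * q + A₂₀₁ * q ^ 2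
      + A₁₂₀ * t - A₁₁₁ * q + A₀₂₁)
      = fun _ => 3 * A₃₀₀ * q ^ 2 - 2 * A₂₁₀ * q + A₁₂₀ :=
    fun q => funext fun t => (((((((((hasDerivAt_id' t).const_mul (3 * A₃₀₀)).mul_const (q ^ 2)).sub (((hasDerivAt_id' t).const_mul (2 * A₂₁₀)).mul_const (q))).add_const (A₂₀₁ * q ^ 2)).add ((hasDerivAt_id' t).const_mul (A₁₂₀))).sub_const (A₁₁₁ * q)).add_const (A₀₂₁)).congr_deriv (by push_cast; ring)).deriv
  have sd2yy : ∀ p : ℝ, deriv (fun t => 6 * A₃₀₀ * p * t - 2 * A₂₁₀ * p + 2 * A₂₀₁ * t - A₁₁₁)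
      = fun _ => 6 * A₃₀₀ * p + 2 * A₂₀₁ :=
    fun p => funext fun t => ((((((hasDerivAt_id' t).const_mul (6 * A₃₀₀ * p)).sub_const (2 * A₂₁₀ * p)).add ((hasDerivAt_id' t).const_mul (2 * A₂₀₁))).sub_const (A₁₁₁)).congr_deriv (by push_cast; ring)).deriv
  have sd2xy : deriv (fun q : ℝ => 3 * A₃₀₀ * q ^ 2 - 2 * A₂₁₀ * q + A₁₂₀)
      = fun t => 6 * A₃₀₀ * t - 2 * A₂₁₀ :=
    funext fun t => (((((hasDerivAt_pow 2 t).const_mul (3 * A₃₀₀)).sub ((hasDerivAt_id' t).const_mul (2 * A₂₁₀))).add_const (A₁₂₀)).congr_deriv (by push_cast; ring)).deriv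
  have sd3x : ∀ q : ℝ, deriv (fun t => -3 * A₃₀₀ * t ^ 2 * q + A₂₁₀ * t ^ 2 - 2 * A₂₀₁ * t * q
      + A₁₁₁ * t - A₁₀₂ * q + A₀₁₂)
      = fun t => -6 * A₃₀₀ * t * q + 2 * A₂₁₀ * t - 2 * A₂₀₁ * q + A₁₁₁ :=
    fun q => funext fun t => (((((((((hasDerivAt_pow 2 t).const_mul (-3 * A₃₀₀)).mul_const (q)).add ((hasDerivAt_pow 2 t).const_mul (A₂₁₀))).sub (((hasDerivAt_id' t).const_mul (2 * A₂₀₁)).mul_const (q))).add ((hasDerivAt_id' t).const_mul (A₁₁₁))).sub_const (A₁₀₂ * q)).add_const (A₀₁₂)).congr_deriv (by push_cast; ring)).deriv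
  have sd3y : ∀ p : ℝ, deriv (fun t => -3 * A₃₀₀ * p ^ 2 * t + A₂₁₀ * p ^ 2 - 2 * A₂₀₁ * p * t
      + A₁₁₁ * p - A₁₀₂ * t + A₀₁₂)
      = fun _ => -3 * A₃₀₀ * p ^ 2 - 2 * A₂₀₁ * p - A₁₀₂ :=
    fun p => funext fun t => ((((((((hasDerivAt_id' t).const_mul (-3 * A₃₀₀ * p ^ 2)).add_const (A₂₁₀ * p ^ 2)).sub ((hasDerivAt_id' t).const_mul (2 * A₂₀₁ * p))).add_const (A₁₁₁ * p)).sub ((hasDerivAt_id' t).const_mul (A₁₀₂))).add_const (A₀₁₂)).congr_deriv (by push_cast; ring)).deriv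
  have sd3xx : ∀ q : ℝ, deriv (fun t => -6 * A₃₀₀ * t * q + 2 * A₂₁₀ * t - 2 * A₂₀₁ * q + A₁₁₁)
      = fun _ => -6 * A₃₀₀ * q + 2 * A₂₁₀ :=
    fun q => funext fun t => (((((((hasDerivAt_id' t).const_mul (-6 * A₃₀₀)).mul_const (q)).add ((hasDerivAt_id' t).const_mul (2 * A₂₁₀))).sub_const (2 * A₂₀₁ * q)).add_const (A₁₁₁)).congr_deriv (by push_cast; ring)).deriv
  have sd3xy : ∀ p : ℝ, deriv (fun t => -6 * A₃₀₀ * p * t + 2 * A₂₁₀ * p - 2 * A₂₀₁ * t + A₁₁₁)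
      = fun _ => -6 * A₃₀₀ * p - 2 * A₂₀₁ :=
    fun p => funext fun t => ((((((hasDerivAt_id' t).const_mul (-6 * A₃₀₀ * p)).add_const (2 * A₂₁₀ * p)).sub ((hasDerivAt_id' t).const_mul (2 * A₂₀₁))).add_const (A₁₁₁)).congr_deriv (by push_cast; ring)).deriv
  have sd4 : deriv (fun s : ℝ => A₃₀₀ * s ^ 3 + A₂₀₁ * s ^ 2 + A₁₀₂ * s + A₀₀₃)
      = fun t => 3 * A₃₀₀ * t ^ 2 + 2 * A₂₀₁ * t + A₁₀₂ :=
    funext fun t => ((((((hasDerivAt_pow 3 t).const_mul (A₃₀₀)).add ((hasDerivAt_pow 2 t).const_mul (A₂₀₁))).add ((hasDerivAt_id' t).const_mul (A₁₀₂))).add_const (A₀₀₃)).congr_deriv (by push_cast; ring)).deriv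
  have sd4p : deriv (fun s : ℝ => 3 * A₃₀₀ * s ^ 2 + 2 * A₂₀₁ * s + A₁₀₂)
      = fun t => 6 * A₃₀₀ * t + 2 * A₂₀₁ :=
    funext fun t => (((((hasDerivAt_pow 2 t).const_mul (3 * A₃₀₀)).add ((hasDerivAt_id' t).const_mul (2 * A₂₀₁))).add_const (A₁₀₂)).congr_deriv (by push_cast; ring)).deriv
  simp only [sA1, sA2, sB1, sB2, sC2, sD1, sD2, sE2, sF2, sd1, sd1p, sd2y, sd2x, sd2yy,
    sd2xy, sd3x, sd3y, sd3xx, sd3xy, sd4, sd4p]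
  linear_combination key
end
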